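/- Fix a positive integer d and γ ∈ [0,1). Let w ∈ ℝ^d have all entries strictly positive, let P be a d×d real matrix with nonnegative entries each of whose columns sums to 1, and let φ₀ ∈ ℝ^d. Set Σ := diag(w), Σcr := Σ·Pᵀ, and A := Σ − γ·Σcr. Then I − γ·P and A are invertible, and with ν := (1−γ)·(I − γ·P)⁻¹·φ₀, the feature-dynamics coverage satisfies (1−γ)²·φ₀ᵀ·A⁻¹·Σ·A⁻ᵀ·φ₀ = Σᵢ νᵢ² / wᵢ. -/

import Mathlib

open Matrix MeasureTheory ProbabilityTheory
open scoped Classical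

noncomputable section

/-- Euclidean norm of a vector in `ℝ^d`. -/
def norm2 {d : ℕ} (v : Fin d → ℝ) : ℝ := Real.sqrt (v ⬝ᵥ v)

/-- The positive semidefinite square root of a matrix (junk value `0` if not PSD). -/
def psdSqrt {d : ℕ} (M : Matrix (Fin d) (Fin d) ℝ) : Matrix (Fin d) (Fin d) ℝ :=
  if h : M.PosSemidef then
    (h.1.eigenvectorUnitary : Matrix (Fin d) (Fin d) ℝ) *
      diagonal ((↑) ∘ Real.sqrt ∘ h.1.eigenvalues) *
      (star h.1.eigenvectorUnitary : Matrix (Fin d) (Fin d) ℝ) else 0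

/-- Largest eigenvalue of a symmetric matrix (junk value `0` if not symmetric). -/
def lamMax {d : ℕ} (M : Matrix (Fin d) (Fin d) ℝ) : ℝ :=
  if h : M.IsHermitian then ⨆ i, h.eigenvalues i else 0

/-- Smallest eigenvalue of a symmetric matrix (junk value `0` if not symmetric). -/
def lamMin {d : ℕ} (M : Matrix (Fin d) (Fin d) ℝ) : ℝ :=
  if h : M.IsHermitian then ⨅ i, h.eigenvalues i else 0

/-- Smallest singular value. -/
def sigmaMin {d : ℕ} (M : Matrix (Fin d) (Fin d) ℝ) : ℝ := Real.sqrt (lamMin (Mᵀ * M))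

/-- Largest singular value (operator norm). -/
def sigmaMax {d : ℕ} (M : Matrix (Fin d) (Fin d) ℝ) : ℝ := Real.sqrt (lamMax (Mᵀ * M))

/-- Empirical covariance matrix `(1/n) ∑ᵢ WᵢWᵢᵀ`. -/
def empSigma {d n : ℕ} (W : Fin n → Fin d → ℝ) : Matrix (Fin d) (Fin d) ℝ :=
  (n : ℝ)⁻¹ • ∑ i, vecMulVec (W i) (W i)

/-- Empirical LSTDQ matrix `(1/n) ∑ᵢ Wᵢ(Wᵢ - γWᵢ')ᵀ`. -/
def empA {d n : ℕ} (γ : ℝ) (W W' : Fin n → Fin d → ℝ) : Matrix (Fin d) (Fin d) ℝ :=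
  (n : ℝ)⁻¹ • ∑ i, vecMulVec (W i) (W i - γ • W' i)

/-- Empirical LSTDQ vector `(1/n) ∑ᵢ RᵢWᵢ`. -/
def empb {d n : ℕ} (W : Fin n → Fin d → ℝ) (R : Fin n → ℝ) : Fin d → ℝ :=
  (n : ℝ)⁻¹ • ∑ i, R i • W i

lemma keyinv (d : ℕ) (γ : ℝ) (hγ0 : 0 ≤ γ) (hγ1 : γ < 1)
    (P : Matrix (Fin d) (Fin d) ℝ) (hP : ∀ i j, 0 ≤ P i j) (hPcol : ∀ j, ∑ i, P i j = 1) :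
    IsUnit ((1 : Matrix (Fin d) (Fin d) ℝ) - γ • P).det := by
  rw [isUnit_iff_ne_zero]
  intro hdet
  obtain ⟨v, hv0, hv⟩ := Matrix.exists_mulVec_eq_zero_iff.mpr hdet
  have hvv : v = γ • (P *ᵥ v) := by
    rwa [Matrix.sub_mulVec, Matrix.one_mulVec, Matrix.smul_mulVec, sub_eq_zero] at hv
  set S := ∑ i, |v i| with hSdef
  have hS0 : 0 < S := by
    obtain ⟨i, hi⟩ := Function.ne_iff.mp hv0
    exact Finset.sum_pos' (fun j _ => abs_nonneg _) ⟨i, Finset.mem_univ i, abs_pos.mpr hi⟩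
  have hle : S ≤ γ * S := by
    have h1 : ∀ i, |v i| = γ * |(P *ᵥ v) i| := by
      intro i
      have := congrFun hvv i
      rw [this, Pi.smul_apply, smul_eq_mul, abs_mul, abs_of_nonneg hγ0]
    have h2 : ∀ i, |(P *ᵥ v) i| ≤ ∑ j, P i j * |v j| := by
      intro i
      calc |(P *ᵥ v) i| = |∑ j, P i j * v j| := rfl
        _ ≤ ∑ j, |P i j * v j| := Finset.abs_sum_le_sum_abs _ _
        _ = ∑ j, P i j * |v j| := by
            refine Finset.sum_congr rfl fun j _ => ?_
            rw [abs_mul, abs_of_nonneg (hP i j)]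
    calc S = ∑ i, γ * |(P *ᵥ v) i| := Finset.sum_congr rfl fun i _ => h1 i
      _ = γ * ∑ i, |(P *ᵥ v) i| := by rw [Finset.mul_sum]
      _ ≤ γ * ∑ i, ∑ j, P i j * |v j| := by
          apply mul_le_mul_of_nonneg_left _ hγ0
          exact Finset.sum_le_sum fun i _ => h2 i
      _ = γ * ∑ j, (∑ i, P i j) * |v j| := by
          rw [Finset.sum_comm]
          congr 1
          exact Finset.sum_congr rfl fun j _ => (Finset.sum_mul _ _ _).symm
      _ = γ * S := by
          congr 1
          exact Finset.sum_congr rfl fun j _ => by rw [hPcol j, one_mul]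
  nlinarith

/-- matrix form of Proposition 5.5 of the paper: in the tabular /
state-aggregation case with `Σ = diag(w)` and a column-stochastic `P`, the feature-dynamics
coverage equals the χ²-type aggregated concentrability `∑ᵢ νᵢ²/wᵢ`. -/
theorem stmt10 (d : ℕ) (hd : 0 < d) (γ : ℝ) (hγ0 : 0 ≤ γ) (hγ1 : γ < 1)
    (w : Fin d → ℝ) (hw : ∀ i, 0 < w i)
    (P : Matrix (Fin d) (Fin d) ℝ) (hP : ∀ i j, 0 ≤ P i j) (hPcol : ∀ j, ∑ i, P i j = 1)
    (φ₀ : Fin d → ℝ) :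
    IsUnit ((1 : Matrix (Fin d) (Fin d) ℝ) - γ • P).det ∧
      IsUnit (Matrix.diagonal w - γ • (Matrix.diagonal w * Pᵀ)).det ∧
      (let A : Matrix (Fin d) (Fin d) ℝ := Matrix.diagonal w - γ • (Matrix.diagonal w * Pᵀ)
       let ν : Fin d → ℝ := (1 - γ) • (((1 : Matrix (Fin d) (Fin d) ℝ) - γ • P)⁻¹ *ᵥ φ₀)
       (1 - γ) ^ 2 * (φ₀ ⬝ᵥ (A⁻¹ *ᵥ (Matrix.diagonal w *ᵥ ((A⁻¹)ᵀ *ᵥ φ₀)))) =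
        ∑ i, ν i ^ 2 / w i) := by
  have hB := keyinv d γ hγ0 hγ1 P hP hPcol
  set B : Matrix (Fin d) (Fin d) ℝ := (1 : Matrix (Fin d) (Fin d) ℝ) - γ • P with hBdef
  have hBt : ((1 : Matrix (Fin d) (Fin d) ℝ) - γ • Pᵀ) = Bᵀ := by
    rw [hBdef, Matrix.transpose_sub, Matrix.transpose_one, Matrix.transpose_smul]
  have hA : Matrix.diagonal w - γ • (Matrix.diagonal w * Pᵀ) = Matrix.diagonal w * Bᵀ := by
    rw [← hBt, Matrix.mul_sub, Matrix.mul_one, Matrix.mul_smul]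
  have hwne : ∀ i, w i ≠ 0 := fun i => (hw i).ne'
  have hDdet : IsUnit (Matrix.diagonal w).det := by
    rw [Matrix.det_diagonal, isUnit_iff_ne_zero]
    exact Finset.prod_ne_zero_iff.mpr fun i _ => hwne i
  have hAdet : IsUnit (Matrix.diagonal w - γ • (Matrix.diagonal w * Pᵀ)).det := by
    rw [hA, Matrix.det_mul, Matrix.det_transpose]
    exact hDdet.mul hB
  refine ⟨hB, hAdet, ?_⟩
  intro A ν
  have hDinv : (Matrix.diagonal w)⁻¹ = Matrix.diagonal (fun i => (w i)⁻¹) := by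
    apply Matrix.inv_eq_right_inv
    rw [Matrix.diagonal_mul_diagonal]
    convert Matrix.diagonal_one
    exact mul_inv_cancel₀ (hwne _)
  have hAinv : A⁻¹ = (B⁻¹)ᵀ * Matrix.diagonal (fun i => (w i)⁻¹) := by
    show (Matrix.diagonal w - γ • (Matrix.diagonal w * Pᵀ))⁻¹ = _
    rw [hA, Matrix.mul_inv_rev, hDinv, ← Matrix.transpose_nonsing_inv]
  have hAinvT : (A⁻¹)ᵀ = Matrix.diagonal (fun i => (w i)⁻¹) * B⁻¹ := by
    rw [hAinv, Matrix.transpose_mul, Matrix.transpose_transpose, Matrix.diagonal_transpose]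
  set u : Fin d → ℝ := B⁻¹ *ᵥ φ₀ with hudef
  have hmid : A⁻¹ * Matrix.diagonal w * (A⁻¹)ᵀ
      = (B⁻¹)ᵀ * (Matrix.diagonal (fun i => (w i)⁻¹) * B⁻¹) := by
    have h1 : Matrix.diagonal (fun i => (w i)⁻¹) * Matrix.diagonal w = 1 := by
      rw [Matrix.diagonal_mul_diagonal]
      convert Matrix.diagonal_one
      exact inv_mul_cancel₀ (hwne _)
    rw [hAinvT, hAinv]
    simp only [Matrix.mul_assoc]
    rw [← Matrix.mul_assoc (Matrix.diagonal fun i => (w i)⁻¹) (Matrix.diagonal w), h1,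
      Matrix.one_mul]
  have hlhs : φ₀ ⬝ᵥ (A⁻¹ *ᵥ (Matrix.diagonal w *ᵥ ((A⁻¹)ᵀ *ᵥ φ₀)))
      = u ⬝ᵥ (Matrix.diagonal (fun i => (w i)⁻¹) *ᵥ u) := by
    rw [Matrix.mulVec_mulVec, Matrix.mulVec_mulVec, hmid, ← Matrix.mulVec_mulVec,
      Matrix.dotProduct_mulVec, Matrix.vecMul_transpose, ← Matrix.mulVec_mulVec]
  rw [hlhs]
  have hν : ∀ i, ν i = (1 - γ) * u i := fun i => rfl
  rw [dotProduct, Finset.mul_sum]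
  refine Finset.sum_congr rfl fun i _ => ?_
  rw [Matrix.mulVec_diagonal, hν i]
  field_simp



end
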